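/- arXiv:1705.00210 — 2 statements merged into one kernel-verified Lean document; each statement's English description precedes it below -/
import Mathlib

section
/- For every γ > 0 there exists a constant C > 0 (depending only on γ) such that for all integers n ≥ 2 and integers N ≥ n^n with γ·n·vol_n(D_n) < N·vol_{n-1}(D_{n-1}), setting t_{n,N} = √(1 − (γ·n·vol_n(D_n)/(N·vol_{n-1}(D_{n-1})))^{2/(n-1)}) and α_{n,r} = α_{n,r,t_{n,N}}: for all r ≥ n², α_{n,r} ≥ 1 − C·√n / r. -/
open MeasureTheory Metric Filter Set
open scoped ENNReal NNReal Topology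

noncomputable section

/-- The closed unit Euclidean ball `D_n` in `ℝ^n`. -/
def unitBall (n : ℕ) : Set (EuclideanSpace ℝ (Fin n)) := Metric.closedBall 0 1

/-- The volume of the unit ball in `ℝ^n`, as a real number. -/
def ballVol (n : ℕ) : ℝ := (volume (unitBall n)).toReal

/-- The uniform (rotation invariant) probability measure on the unit sphere `S^{n-1}`:
the normalized `(n-1)`-dimensional Hausdorff measure restricted to the sphere. -/
def sphereUniform (n : ℕ) : Measure (EuclideanSpace ℝ (Fin n)) :=
  (μH[(n : ℝ) - 1] (Metric.sphere (0 : EuclideanSpace ℝ (Fin n)) 1))⁻¹ •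
    (μH[(n : ℝ) - 1]).restrict (Metric.sphere (0 : EuclideanSpace ℝ (Fin n)) 1)

/-- `capProb n r t` is the probability that a uniform random point `y` of the unit sphere
`S^{n-1}` satisfies `⟨x, y⟩ ≥ t`, for a fixed `x` with `‖x‖ = r`, given by the explicit
cap-plus-cone formula. -/
def capProb (n : ℕ) (r t : ℝ) : ℝ :=
  if r < t then 0
  else (2 * ballVol (n - 1) / ballVol n) *
    ((∫ s in (t / r)..1, (1 - s ^ 2) ^ (((n : ℝ) - 1) / 2)) +
      (t / (n * r)) * (1 - t ^ 2 / r ^ 2) ^ (((n : ℝ) - 1) / 2))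

/-- The width `t_{n,N}` of the slabs used in the random construction; here the surface
area of `D_n` is `n · vol_n(D_n)`. -/
def tWidth (γ : ℝ) (n N : ℕ) : ℝ :=
  Real.sqrt (1 - (γ * n * ballVol n / (N * ballVol (n - 1))) ^ (2 / ((n : ℝ) - 1)))

section AuxLemmas
open Real intervalIntegral

lemma cos_pow_integral (n : ℕ) :
    ∫ x in (0:ℝ)..(π/2), Real.cos x ^ n =
      Real.sqrt π * Real.Gamma (((n : ℝ) + 1) / 2) / (2 * Real.Gamma ((n : ℝ) / 2 + 1)) := by
  induction n using Nat.twoStepInduction with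
  | zero =>
      have h1 : (((0:ℕ):ℝ) + 1) / 2 = 1/2 := by norm_num
      have h2 : ((0:ℕ):ℝ) / 2 + 1 = 1 := by norm_num
      rw [h1, h2, Real.Gamma_one, Real.Gamma_one_half_eq]
      have h3 : Real.sqrt π * Real.sqrt π = π := Real.mul_self_sqrt Real.pi_pos.le
      rw [h3]
      simp
  | one =>
      simp only [pow_one]
      rw [integral_cos]
      have h2 : Real.Gamma ((1:ℝ)/2 + 1) = (1/2) * Real.Gamma (1/2) :=
        Real.Gamma_add_one (by norm_num)
      push_cast
      rw [show ((1:ℝ)+1)/2 = 1 by norm_num, Real.Gamma_one, h2, Real.Gamma_one_half_eq]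
      have : Real.sqrt π ≠ 0 := by positivity
      field_simp
      simp
  | more n ih _ =>
      have key := integral_cos_pow (a := 0) (b := π/2) n
      rw [Real.cos_pi_div_two, Real.sin_zero] at key
      rw [zero_pow (Nat.succ_ne_zero n)] at key
      simp only [zero_mul, mul_zero, sub_zero, zero_sub, zero_div, zero_add, neg_zero] at key
      rw [key, ih]
      have e1 : ((n:ℝ) + 2 + 1) / 2 = ((n:ℝ)+1)/2 + 1 := by ring
      have e2 : ((n:ℝ) + 2) / 2 + 1 = ((n:ℝ)/2 + 1) + 1 := by ring
      have gb1 : Real.Gamma (((n:ℝ)+1)/2 + 1) = (((n:ℝ)+1)/2) * Real.Gamma (((n:ℝ)+1)/2) :=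
        Real.Gamma_add_one (by positivity)
      have gb2 : Real.Gamma (((n:ℝ)/2+1) + 1) = ((n:ℝ)/2+1) * Real.Gamma ((n:ℝ)/2+1) :=
        Real.Gamma_add_one (by positivity)
      push_cast
      rw [e1, e2, gb1, gb2]
      have g1 : 0 < Real.Gamma (((n:ℝ)+1)/2) := Real.Gamma_pos_of_pos (by positivity)
      have g2 : 0 < Real.Gamma ((n:ℝ)/2 + 1) := Real.Gamma_pos_of_pos (by positivity)
      have hn2 : ((n:ℝ) + 2) ≠ 0 := by positivity
      field_simp

lemma one_sub_sq_integral (n : ℕ) (hn : 1 ≤ n) :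
    ∫ s in (0:ℝ)..1, (1 - s ^ 2) ^ (((n : ℝ) - 1) / 2) =
      ∫ x in (0:ℝ)..(π/2), Real.cos x ^ n := by
  set c : ℝ := ((n : ℝ) - 1) / 2 with hc
  have hc0 : 0 ≤ c := by
    have : (1:ℝ) ≤ (n:ℝ) := by exact_mod_cast hn
    rw [hc]; linarith
  have hf : Continuous fun s : ℝ => (1 - s ^ 2) ^ c :=
    (Real.continuous_rpow_const hc0).comp (by continuity)
  have hsub := intervalIntegral.integral_comp_smul_deriv
      (a := 0) (b := π/2) (f := Real.sin) (f' := Real.cos)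
      (g := fun s : ℝ => (1 - s ^ 2) ^ c)
      (fun x _ => Real.hasDerivAt_sin x) Real.continuousOn_cos hf
  rw [Real.sin_zero, Real.sin_pi_div_two] at hsub
  rw [← hsub]
  apply intervalIntegral.integral_congr
  intro x hx
  rw [uIcc_of_le (by positivity)] at hx
  have hcos : 0 ≤ Real.cos x := Real.cos_nonneg_of_mem_Icc
    ⟨by linarith [hx.1, Real.pi_pos], hx.2⟩
  simp only [Function.comp, smul_eq_mul]
  have h1 : (1 : ℝ) - Real.sin x ^ 2 = Real.cos x ^ 2 := (Real.cos_sq' x).symm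
  rw [h1]
  have h2 : (Real.cos x ^ 2 : ℝ) ^ c = Real.cos x ^ ((2:ℝ) * c) := by
    rw [← Real.rpow_natCast (Real.cos x) 2, ← Real.rpow_mul hcos]
    norm_num
  have h3 : (2:ℝ) * c = ((n - 1 : ℕ) : ℝ) := by
    rw [hc]; push_cast [Nat.cast_sub hn]; ring
  rw [h2, h3, Real.rpow_natCast]
  rw [← pow_succ']
  congr 1
  omega

end AuxLemmas

section MainProof
open Real intervalIntegral
lemma ballVol_eq (m : ℕ) (hm : 1 ≤ m) :
    ballVol m = Real.sqrt Real.pi ^ m / Real.Gamma ((m : ℝ) / 2 + 1) := by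
  haveI : Nonempty (Fin m) := ⟨⟨0, hm⟩⟩
  have hg : 0 < Real.Gamma ((m : ℝ) / 2 + 1) := Real.Gamma_pos_of_pos (by positivity)
  rw [ballVol, unitBall, EuclideanSpace.volume_closedBall, Fintype.card_fin,
    ENNReal.ofReal_one, one_pow, one_mul, ENNReal.toReal_ofReal (by positivity)]

lemma ballVol_pos (m : ℕ) (hm : 1 ≤ m) : 0 < ballVol m := by
  have hg : 0 < Real.Gamma ((m : ℝ) / 2 + 1) := Real.Gamma_pos_of_pos (by positivity)
  rw [ballVol_eq m hm]
  positivity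

set_option maxHeartbeats 1000000 in
theorem statement15 (γ : ℝ) (hγ : 0 < γ) :
    ∃ C : ℝ, 0 < C ∧ ∀ n N : ℕ, 2 ≤ n → n ^ n ≤ N →
      γ * n * ballVol n < N * ballVol (n - 1) →
      ∀ r : ℝ, (n : ℝ) ^ 2 ≤ r →
        1 - C * Real.sqrt n / r ≤ capProb n r (tWidth γ n N) := by
  refine ⟨2, two_pos, fun n N hn2 hN hlt r hr => ?_⟩
  have hn1 : 1 ≤ n := le_trans one_le_two hn2
  have hnR : (2:ℝ) ≤ (n:ℝ) := by exact_mod_cast hn2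
  have hn0R : (0:ℝ) < n := by linarith
  have hπ : (0:ℝ) < Real.sqrt Real.pi := Real.sqrt_pos.mpr Real.pi_pos
  have hb : 0 < ballVol n := ballVol_pos n hn1
  have hb1 : 0 < ballVol (n-1) := ballVol_pos (n-1) (by omega)
  have hr4 : (4:ℝ) ≤ r := le_trans (by nlinarith) hr
  have hr0 : (0:ℝ) < r := by linarith
  set t := tWidth γ n N with htdef
  have ht0 : 0 ≤ t := Real.sqrt_nonneg _
  have ht1 : t ≤ 1 := by
    have hNb : 0 < (N:ℝ) * ballVol (n-1) := lt_trans (by positivity) hlt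
    have hB : 0 < γ * n * ballVol n / ((N:ℝ) * ballVol (n-1)) := by positivity
    have hX : 0 < (γ * n * ballVol n / ((N:ℝ) * ballVol (n-1))) ^ (2 / ((n:ℝ) - 1)) :=
      Real.rpow_pos_of_pos hB _
    rw [htdef, tWidth]
    calc Real.sqrt (1 - (γ * ↑n * ballVol n / (↑N * ballVol (n - 1))) ^ (2 / ((n:ℝ) - 1)))
        ≤ Real.sqrt 1 := Real.sqrt_le_sqrt (by linarith)
      _ = 1 := Real.sqrt_one
  set c : ℝ := ((n:ℝ) - 1) / 2 with hcdef
  have hc0 : (0:ℝ) ≤ c := by rw [hcdef]; linarith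
  have hf : Continuous fun s : ℝ => (1 - s ^ 2) ^ c :=
    (Real.continuous_rpow_const hc0).comp (by continuity)
  -- the full integral
  set I₀ : ℝ := ∫ s in (0:ℝ)..1, (1 - s ^ 2) ^ c with hI₀def
  have hI₀ : I₀ = Real.sqrt Real.pi * Real.Gamma (((n:ℝ) + 1) / 2) /
      (2 * Real.Gamma ((n:ℝ) / 2 + 1)) := by
    rw [hI₀def, hcdef, one_sub_sq_integral n hn1, cos_pow_integral n]
  set K : ℝ := 2 * ballVol (n - 1) / ballVol n with hKdef
  have hKpos : 0 < K := by positivity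
  have hg1 : 0 < Real.Gamma (((n:ℝ) + 1) / 2) := Real.Gamma_pos_of_pos (by positivity)
  have hg2 : 0 < Real.Gamma ((n:ℝ) / 2 + 1) := Real.Gamma_pos_of_pos (by positivity)
  have hKI : K * I₀ = 1 := by
    have hcast : ((n - 1 : ℕ) : ℝ) / 2 + 1 = ((n:ℝ) + 1) / 2 := by
      rw [Nat.cast_sub hn1]; push_cast; ring
    have hpow : Real.sqrt Real.pi ^ n = Real.sqrt Real.pi ^ (n-1) * Real.sqrt Real.pi := by
      rw [← pow_succ]; congr 1; omega
    rw [hKdef, hI₀, ballVol_eq n hn1, ballVol_eq (n-1) (by omega), hcast, hpow]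
    have hps : (0:ℝ) < Real.sqrt Real.pi ^ (n-1) := by positivity
    field_simp
  -- lower bound for the integral
  have hsqrtn : (0:ℝ) < Real.sqrt n := Real.sqrt_pos.mpr hn0R
  have hI₀lb : 1 / (2 * Real.sqrt n) ≤ I₀ := by
    set a : ℝ := 1 / Real.sqrt n with hadef
    have ha0 : 0 < a := by positivity
    have ha1 : a ≤ 1 := by
      rw [hadef, div_le_one hsqrtn]
      have : (1:ℝ) ≤ (n:ℝ) := by linarith
      calc (1:ℝ) = Real.sqrt 1 := Real.sqrt_one.symm
        _ ≤ Real.sqrt n := Real.sqrt_le_sqrt this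
    have hbase : (0:ℝ) < 1 - 1/(n:ℝ) := by
      have h2 : 1/(n:ℝ) ≤ 1/2 := by
        apply one_div_le_one_div_of_le <;> linarith
      linarith
    -- (1 - 1/n) ^ c ≥ 1/2
    have hpow_lb : (1:ℝ)/2 ≤ (1 - 1/(n:ℝ)) ^ c := by
      have hlog : -(1/((n:ℝ)-1)) ≤ Real.log (1 - 1/(n:ℝ)) := by
        have hne1 : (n:ℝ) ≠ 0 := by positivity
        have hne2 : (n:ℝ) - 1 ≠ 0 := by intro h; linarith
        have hx : (0:ℝ) < (n:ℝ)/((n:ℝ)-1) := by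
          apply div_pos hn0R; linarith
        have h2 : Real.log ((n:ℝ)/((n:ℝ)-1)) ≤ (n:ℝ)/((n:ℝ)-1) - 1 :=
          Real.log_le_sub_one_of_pos hx
        have hinv : (1 - 1/(n:ℝ)) = ((n:ℝ)/((n:ℝ)-1))⁻¹ := by
          rw [inv_div]
          field_simp
        rw [hinv, Real.log_inv]
        have h3 : (n:ℝ)/((n:ℝ)-1) - 1 = 1/((n:ℝ)-1) := by
          field_simp
          ring
        linarith
      have hprod : -(1/2 : ℝ) ≤ Real.log (1 - 1/(n:ℝ)) * c := by
        have h1 : (-(1/((n:ℝ)-1))) * c ≤ Real.log (1 - 1/(n:ℝ)) * c :=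
          mul_le_mul_of_nonneg_right hlog hc0
        have h2 : (-(1/((n:ℝ)-1))) * c = -(1/2 : ℝ) := by
          rw [hcdef]
          have h4 : (n:ℝ) - 1 ≠ 0 := by linarith
          field_simp
        linarith
      rw [Real.rpow_def_of_pos hbase]
      calc (1:ℝ)/2 = 1 + (-(1/2:ℝ)) := by ring
        _ ≤ Real.exp (-(1/2:ℝ)) := by
            have := Real.add_one_le_exp (-(1/2:ℝ)); linarith
        _ ≤ Real.exp (Real.log (1 - 1/(n:ℝ)) * c) := Real.exp_le_exp.mpr hprod
    have hint1 : a * ((1 - 1/(n:ℝ)) ^ c) ≤ ∫ s in (0:ℝ)..a, (1 - s ^ 2) ^ c := by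
      have hmono : ∀ s ∈ Set.Icc (0:ℝ) a, (1 - 1/(n:ℝ)) ^ c ≤ (1 - s ^ 2) ^ c := by
        intro s hs
        apply Real.rpow_le_rpow hbase.le _ hc0
        have ha2 : a ^ 2 = 1/(n:ℝ) := by
          rw [hadef, div_pow, one_pow, Real.sq_sqrt hn0R.le]
        nlinarith [hs.1, hs.2]
      have h := intervalIntegral.integral_mono_on ha0.le
        (intervalIntegrable_const :
          IntervalIntegrable (fun _ => (1 - 1/(n:ℝ)) ^ c) volume 0 a)
        (hf.intervalIntegrable 0 a) hmono
      simpa using h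
    have hint2 : (0:ℝ) ≤ ∫ s in a..1, (1 - s ^ 2) ^ c := by
      apply intervalIntegral.integral_nonneg ha1
      intro s hs
      apply Real.rpow_nonneg
      have hs1 : (0:ℝ) ≤ s := le_trans ha0.le hs.1
      have hs2 : s ≤ 1 := hs.2
      nlinarith
    have hsplit : (∫ s in (0:ℝ)..a, (1 - s ^ 2) ^ c) + (∫ s in a..1, (1 - s ^ 2) ^ c) = I₀ :=
      intervalIntegral.integral_add_adjacent_intervals
        (hf.intervalIntegrable 0 a) (hf.intervalIntegrable a 1)
    have hfin : a * (1/2 : ℝ) ≤ I₀ := by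
      have h3 : a * (1/2:ℝ) ≤ a * ((1 - 1/(n:ℝ)) ^ c) :=
        mul_le_mul_of_nonneg_left hpow_lb ha0.le
      linarith
    calc 1 / (2 * Real.sqrt n) = a * (1/2:ℝ) := by
          rw [hadef]; field_simp
      _ ≤ I₀ := hfin
  have hI₀pos : 0 < I₀ := lt_of_lt_of_le (by positivity) hI₀lb
  have hKle : K ≤ 2 * Real.sqrt n := by
    have h := mul_le_mul_of_nonneg_left hI₀lb hKpos.le
    rw [hKI] at h
    have h2 : K * (1/(2*Real.sqrt n)) = K / (2*Real.sqrt n) := by ring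
    rw [h2, div_le_one (by positivity)] at h
    exact h
  -- unfold capProb
  have hnotlt : ¬ (r < t) := by push_neg; linarith
  rw [capProb, if_neg hnotlt]
  set J : ℝ := ∫ s in (0:ℝ)..(t/r), (1 - s ^ 2) ^ c with hJdef
  set I₁ : ℝ := ∫ s in (t/r)..1, (1 - s ^ 2) ^ c with hI₁def
  have htr0 : 0 ≤ t/r := by positivity
  have htr1 : t/r ≤ 1 := by
    rw [div_le_one hr0]; linarith
  have hsplit2 : J + I₁ = I₀ :=
    intervalIntegral.integral_add_adjacent_intervals
      (hf.intervalIntegrable 0 (t/r)) (hf.intervalIntegrable (t/r) 1)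
  have hJub : J ≤ t/r := by
    have hmono : ∀ s ∈ Set.Icc (0:ℝ) (t/r), (1 - s ^ 2) ^ c ≤ 1 := by
      intro s hs
      apply Real.rpow_le_one _ _ hc0
      · nlinarith [hs.1, hs.2]
      · nlinarith [hs.1]
    have h := intervalIntegral.integral_mono_on htr0
      (hf.intervalIntegrable 0 (t/r))
      (intervalIntegrable_const : IntervalIntegrable (fun _ => (1:ℝ)) volume 0 (t/r)) hmono
    simpa using h
  have hcone : 0 ≤ t / ((n:ℝ) * r) * (1 - t ^ 2 / r ^ 2) ^ c := by
    apply mul_nonneg (by positivity)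
    apply Real.rpow_nonneg
    have h1 : t ^ 2 ≤ r ^ 2 := by nlinarith
    have h2 : t ^ 2 / r ^ 2 ≤ 1 := by
      rw [div_le_one (by positivity)]; exact h1
    linarith
  -- final chain
  have hKJ : K * J ≤ 2 * Real.sqrt n / r := by
    calc K * J ≤ K * (t/r) := mul_le_mul_of_nonneg_left hJub hKpos.le
      _ ≤ (2 * Real.sqrt n) * (t/r) := mul_le_mul_of_nonneg_right hKle htr0
      _ ≤ (2 * Real.sqrt n) * (1/r) := by
          apply mul_le_mul_of_nonneg_left _ (by positivity)
          rw [div_le_div_iff₀ hr0 hr0]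
          nlinarith
      _ = 2 * Real.sqrt n / r := by ring
  have hgoal : 1 - K * J ≤ K * (I₁ + t / ((n:ℝ) * r) * (1 - t ^ 2 / r ^ 2) ^ c) := by
    have e1 : K * I₁ = 1 - K * J := by
      have : K * (J + I₁) = 1 := by rw [hsplit2, hKI]
      ring_nf
      ring_nf at this
      linarith
    have e2 : 0 ≤ K * (t / ((n:ℝ) * r) * (1 - t ^ 2 / r ^ 2) ^ c) :=
      mul_nonneg hKpos.le hcone
    calc 1 - K * J = K * I₁ := e1.symm
      _ ≤ K * I₁ + K * (t / ((n:ℝ) * r) * (1 - t ^ 2 / r ^ 2) ^ c) := by linarith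
      _ = K * (I₁ + t / ((n:ℝ) * r) * (1 - t ^ 2 / r ^ 2) ^ c) := by ring
  have : 1 - 2 * Real.sqrt n / r ≤ 1 - K * J := by linarith
  linarith

end MainProof
end
end

section
/- There exists an absolute constant C > 0 such that for every integer n ≥ 2 and every real a ∈ (2/3, 1): | ∫_a^1 (1 − x²)^{(n-1)/2} dx − (1 − a²)^{(n+1)/2} / (a·(n−1)) | ≤ (C/n) · ∫_a^1 (1 − x²)^{(n-1)/2} dx. -/
open MeasureTheory Set

noncomputable section

set_option maxHeartbeats 1000000 in
theorem statement17 :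
    ∃ C : ℝ, 0 < C ∧ ∀ n : ℕ, 2 ≤ n → ∀ a : ℝ, a ∈ Set.Ioo (2/3 : ℝ) 1 →
      |(∫ x in a..1, (1 - x ^ 2) ^ (((n : ℝ) - 1) / 2)) -
          (1 - a ^ 2) ^ (((n : ℝ) + 1) / 2) / (a * ((n : ℝ) - 1))| ≤
        C / n * ∫ x in a..1, (1 - x ^ 2) ^ (((n : ℝ) - 1) / 2) := by
  refine ⟨7, by norm_num, ?_⟩
  intro n hn a ha
  obtain ⟨ha23, ha1⟩ := ha
  have ha0 : (0:ℝ) < a := by linarith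
  have hn2 : (2:ℝ) ≤ (n:ℝ) := by exact_mod_cast hn
  have hn0 : (0:ℝ) < (n:ℝ) := by linarith
  have hn1 : (0:ℝ) < (n:ℝ) - 1 := by linarith
  set p : ℝ := ((n:ℝ) - 1)/2 with hp_def
  have hp0 : 0 < p := by rw [hp_def]; linarith
  have hq1 : (1:ℝ) ≤ p + 1 := by linarith
  have hpe : ((n:ℝ) + 1)/2 = p + 1 := by rw [hp_def]; ring
  rw [hpe]
  -- continuity facts
  have c1 : Continuous fun x : ℝ => (1 - x^2 : ℝ)^p :=
    (Real.continuous_rpow_const hp0.le).comp (by continuity)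
  have c2 : Continuous fun x : ℝ => (1 - x^2 : ℝ)^(p+1) :=
    (Real.continuous_rpow_const (by linarith : (0:ℝ) ≤ p + 1)).comp (by continuity)
  have hi1 : IntervalIntegrable (fun x : ℝ => (1 - x^2)^p) volume a 1 :=
    c1.intervalIntegrable a 1
  have hi2 : IntervalIntegrable (fun x : ℝ => (1 - x^2)^(p+1)/x^2) volume a 1 := by
    apply ContinuousOn.intervalIntegrable
    apply c2.continuousOn.div (continuous_pow 2).continuousOn
    intro x hx
    rw [uIcc_of_le ha1.le] at hx
    have : 0 < x := lt_of_lt_of_le ha0 hx.1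
    positivity
  -- the key integration-by-parts identity
  have key : (∫ x in a..1, (((n:ℝ)+1) * (1 - x^2)^p + (1 - x^2)^(p+1) / x^2))
      = (1 - a^2)^(p+1) / a := by
    have hderiv : ∀ x ∈ uIcc a 1, HasDerivAt (fun y : ℝ => -(1 - y^2)^(p+1) / y)
        (((n:ℝ)+1) * (1 - x^2)^p + (1 - x^2)^(p+1) / x^2) x := by
      intro x hx
      rw [uIcc_of_le ha1.le] at hx
      have hx0 : x ≠ 0 := (lt_of_lt_of_le ha0 hx.1).ne'
      have h1 : HasDerivAt (fun y : ℝ => 1 - y^2) (-(2*x)) x := by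
        simpa using ((hasDerivAt_pow 2 x).const_sub 1)
      have h2 : HasDerivAt (fun y : ℝ => (1 - y^2)^(p+1))
          ((p+1) * (1 - x^2)^(p+1-1) * (-(2*x))) x :=
        (Real.hasDerivAt_rpow_const (Or.inr hq1)).comp x h1
      have h3 : HasDerivAt (fun y : ℝ => -(1 - y^2)^(p+1))
          (-((p+1) * (1 - x^2)^(p+1-1) * (-(2*x)))) x := h2.neg
      have h4 := h3.div (hasDerivAt_id x) hx0
      refine h4.congr_deriv (Eq.symm ?_)
      have hps : p + 1 - 1 = p := by ring
      rw [hps, id_eq]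
      have hx2 : (x:ℝ)^2 ≠ 0 := pow_ne_zero _ hx0
      have hrw : (1 - x^2)^(p+1) = (1 - x^2)^p * (1 - x^2) := by
        rcases eq_or_ne (1 - x^2) 0 with h | h
        · rw [h, Real.zero_rpow (by linarith : p + 1 ≠ 0), mul_zero]
        · rw [Real.rpow_add_one h]
      rw [hrw, hp_def]
      field_simp
      ring
    have hint : IntervalIntegrable
        (fun x : ℝ => ((n:ℝ)+1) * (1 - x^2)^p + (1 - x^2)^(p+1) / x^2) volume a 1 :=
      (hi1.const_mul _).add hi2
    rw [intervalIntegral.integral_eq_sub_of_hasDerivAt hderiv hint]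
    have h10 : (1:ℝ) - 1^2 = 0 := by norm_num
    rw [h10, Real.zero_rpow (by linarith : p + 1 ≠ 0)]
    ring
  set I := ∫ x in a..1, (1 - x^2 : ℝ)^p with hI_def
  set E := ∫ x in a..1, (1 - x^2 : ℝ)^(p+1)/x^2 with hE_def
  have keq : ((n:ℝ)+1) * I + E = (1 - a^2)^(p+1) / a := by
    rw [hI_def, hE_def, ← intervalIntegral.integral_const_mul,
      ← intervalIntegral.integral_add (hi1.const_mul _) hi2]
    exact key
  -- nonnegativity
  have hbase : ∀ x ∈ Icc a (1:ℝ), (0:ℝ) ≤ 1 - x^2 := by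
    intro x hx
    have h1 : 0 ≤ x := le_trans ha0.le hx.1
    nlinarith [hx.2]
  have hI0 : 0 ≤ I :=
    intervalIntegral.integral_nonneg ha1.le
      (fun x hx => Real.rpow_nonneg (hbase x hx) _)
  have hE0 : 0 ≤ E :=
    intervalIntegral.integral_nonneg ha1.le
      (fun x hx => div_nonneg (Real.rpow_nonneg (hbase x hx) _) (sq_nonneg x))
  -- E ≤ (5/4) I
  have hEI : E ≤ 5/4 * I := by
    have hmono : E ≤ ∫ x in a..1, 5/4 * (1 - x^2 : ℝ)^p := by
      apply intervalIntegral.integral_mono_on ha1.le hi2 (hi1.const_mul _)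
      intro x hx
      have hxa : a ≤ x := hx.1
      have hx1 : x ≤ 1 := hx.2
      have hx23 : (2:ℝ)/3 < x := lt_of_lt_of_le ha23 hxa
      have h0 : (0:ℝ) ≤ 1 - x^2 := hbase x hx
      rcases eq_or_ne (1 - x^2) 0 with h | h
      · rw [h, Real.zero_rpow (by linarith : p + 1 ≠ 0), zero_div]
        exact mul_nonneg (by norm_num) (Real.rpow_nonneg le_rfl _)
      · rw [Real.rpow_add_one h]
        rw [div_le_iff₀ (by positivity : (0:ℝ) < x^2)]
        have hrp : (0:ℝ) ≤ (1 - x^2)^p := Real.rpow_nonneg h0 _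
        have hxx : 1 - x^2 ≤ 5/4 * x^2 := by nlinarith [sq_nonneg (x - 2/3)]
        nlinarith [mul_le_mul_of_nonneg_left hxx hrp]
    calc E ≤ ∫ x in a..1, 5/4 * (1 - x^2 : ℝ)^p := hmono
      _ = 5/4 * I := by rw [intervalIntegral.integral_const_mul]
  -- rewrite the target
  have h3 : (1 - a^2)^(p+1) / (a * ((n:ℝ)-1)) = (((n:ℝ)+1)*I + E)/((n:ℝ)-1) := by
    rw [← div_div, keq]
  rw [h3]
  have h4 : I - (((n:ℝ)+1)*I + E)/((n:ℝ)-1) = -((2*I + E)/((n:ℝ)-1)) := by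
    field_simp
    ring
  rw [h4, abs_neg, abs_of_nonneg (div_nonneg (by linarith) hn1.le)]
  rw [div_le_iff₀ hn1, div_mul_eq_mul_div, div_mul_eq_mul_div, le_div_iff₀ hn0]
  nlinarith [mul_nonneg hI0 (by linarith : (0:ℝ) ≤ (n:ℝ) - 2),
    mul_le_mul_of_nonneg_right hEI hn0.le]
end
end
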